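/- The strong-coupling expansion of the quartic integral converges and sums to a Bessel function: (1/2π) ∑_{p≥0} ((-1)^p/(2^p p!)) g^{-2p} ∫_{-∞}^{∞} x^{2p} e^{-x⁴} dx = (1/√(32π²g²)) e^{1/(32g⁴)} K_{1/4}(1/(32g⁴)) for g > 0, where K_ν is the modified Bessel function of the second kind. -/

import Mathlib

open MeasureTheory

/-- modified Bessel function of the second kind, K_ν(z) = ∫_0^∞ e^{-z cosh t} cosh(νt) dt. -/
noncomputable def besselK (ν z : ℝ) : ℝ :=
  ∫ t in Set.Ioi (0 : ℝ), Real.exp (-z * Real.cosh t) * Real.cosh (ν * t)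

lemma integrable_aux (a : ℝ) : Integrable (fun x : ℝ => Real.exp (a * x ^ 2 - x ^ 4)) := by
  have h := (integrable_exp_neg_mul_sq (b := 1) one_pos).const_mul (Real.exp ((a + 1) ^ 2 / 4))
  refine h.mono' (Continuous.aestronglyMeasurable (by continuity)) ?_
  filter_upwards with x
  rw [Real.norm_of_nonneg (Real.exp_nonneg _), ← Real.exp_add]
  apply Real.exp_le_exp.mpr
  nlinarith [sq_nonneg ((a + 1) / 2 - x ^ 2), sq_nonneg x]

lemma pow_le_exp_aux (a x : ℝ) (ha : 0 < a) (p : ℕ) :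
    (x ^ 2) ^ p ≤ (p.factorial : ℝ) * a ^ (-(p : ℤ)) * Real.exp (a * x ^ 2) := by
  have h : (a * x ^ 2) ^ p / (p.factorial : ℝ) ≤ Real.exp (a * x ^ 2) := by
    have := Real.sum_le_exp_of_nonneg (x := a * x ^ 2) (by positivity) (p + 1)
    refine le_trans ?_ this
    exact Finset.single_le_sum (f := fun i => (a * x ^ 2) ^ i / (i.factorial : ℝ))
      (fun i _ => by positivity) (Finset.self_mem_range_succ p)
  have hfac : (0 : ℝ) < (p.factorial : ℝ) := by exact_mod_cast p.factorial_pos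
  rw [mul_pow] at h
  rw [zpow_neg, zpow_natCast]
  rw [div_le_iff₀ hfac] at h
  calc (x ^ 2) ^ p = (a ^ p * (x ^ 2) ^ p) * (a ^ p)⁻¹ := by
        field_simp
    _ ≤ (Real.exp (a * x ^ 2) * (p.factorial : ℝ)) * (a ^ p)⁻¹ := by
        apply mul_le_mul_of_nonneg_right h (by positivity)
    _ = (p.factorial : ℝ) * (a ^ p)⁻¹ * Real.exp (a * x ^ 2) := by ring

lemma integrable_pow_exp (p : ℕ) :
    Integrable (fun x : ℝ => x ^ (2 * p) * Real.exp (-x ^ 4)) := by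
  have h := (integrable_aux 1).const_mul ((p.factorial : ℝ) * 1 ^ (-(p : ℤ)))
  refine h.mono' (Continuous.aestronglyMeasurable (by continuity)) ?_
  filter_upwards with x
  have h1 : x ^ (2 * p) = (x ^ 2) ^ p := by rw [pow_mul]
  rw [Real.norm_eq_abs, abs_mul, abs_of_nonneg (Real.exp_nonneg _), h1, abs_pow, abs_of_nonneg (sq_nonneg x)]
  have := pow_le_exp_aux 1 x one_pos p
  calc (x ^ 2) ^ p * Real.exp (-x ^ 4)
      ≤ ((p.factorial : ℝ) * 1 ^ (-(p : ℤ)) * Real.exp (1 * x ^ 2)) * Real.exp (-x ^ 4) := by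
        apply mul_le_mul_of_nonneg_right this (Real.exp_nonneg _)
    _ = (p.factorial : ℝ) * 1 ^ (-(p : ℤ)) * Real.exp (1 * x ^ 2 - x ^ 4) := by
        rw [mul_assoc, ← Real.exp_add]; ring_nf

lemma quartic_integral (b : ℝ) (hb : 0 < b) :
    ∫ x : ℝ, Real.exp (-x ^ 4 - b * x ^ 2)
      = Real.sqrt b / 2 * Real.exp (b ^ 2 / 8) * besselK (1 / 4) (b ^ 2 / 8) := by
  set s := Real.sqrt b with hsdef
  have hs : 0 < s := Real.sqrt_pos.mpr hb
  have hs2 : s ^ 2 = b := Real.sq_sqrt hb.le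
  have heven : ∫ x : ℝ, Real.exp (-x ^ 4 - b * x ^ 2)
      = 2 * ∫ x in Set.Ioi (0:ℝ), Real.exp (-x ^ 4 - b * x ^ 2) := by
    rw [← integral_comp_abs (f := fun x => Real.exp (-x ^ 4 - b * x ^ 2))]
    congr 1
    funext x
    rw [show |x| ^ 4 = x ^ 4 by rw [pow_abs, abs_of_nonneg (by positivity)],
      show |x| ^ 2 = x ^ 2 from sq_abs x]
  have hderiv : ∀ t ∈ Set.Ioi (0:ℝ), HasDerivWithinAt (fun t => s * Real.sinh (t / 2))
      (s / 2 * Real.cosh (t / 2)) (Set.Ioi 0) t := by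
    intro t _
    have h := (((Real.hasDerivAt_sinh (t / 2)).comp t
      ((hasDerivAt_id t).div_const 2)).const_mul s).hasDerivWithinAt
      (s := Set.Ioi (0:ℝ))
    convert! h using 1
    ring
  have hinj : Set.InjOn (fun t => s * Real.sinh (t / 2)) (Set.Ioi 0) := by
    intro x _ y _ h
    have h2 := Real.sinh_injective (mul_left_cancel₀ hs.ne' h)
    linarith
  have himg : (fun t => s * Real.sinh (t / 2)) '' Set.Ioi 0 = Set.Ioi 0 := by
    ext x
    constructor
    · rintro ⟨t, ht, rfl⟩
      exact mul_pos hs (Real.sinh_pos_iff.mpr (by simpa using (by linarith [Set.mem_Ioi.mp ht] : (0:ℝ) < t/2)))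
    · intro hx
      refine ⟨2 * Real.arsinh (x / s), ?_, ?_⟩
      · have : 0 < Real.arsinh (x / s) := Real.arsinh_pos_iff.mpr (div_pos (Set.mem_Ioi.mp hx) hs)
        exact Set.mem_Ioi.mpr (by linarith)
      · simp only [mul_div_cancel_left₀ _ (two_ne_zero (α := ℝ))]
        rw [Real.sinh_arsinh, mul_div_cancel₀ _ hs.ne']
  have hsub := integral_image_eq_integral_abs_deriv_smul measurableSet_Ioi hderiv hinj
    (fun x => Real.exp (-x ^ 4 - b * x ^ 2))
  rw [himg] at hsub
  have hpt : Set.EqOn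
      (fun t => |s / 2 * Real.cosh (t / 2)| •
        Real.exp (-(s * Real.sinh (t / 2)) ^ 4 - b * (s * Real.sinh (t / 2)) ^ 2))
      (fun t => (s / 2 * Real.exp (b ^ 2 / 8)) *
        (Real.exp (-(b ^ 2 / 8) * Real.cosh (2 * t)) * Real.cosh (1 / 4 * (2 * t))))
      (Set.Ioi 0) := by
    intro t _
    have hch : Real.cosh (2 * t) = 2 * (2 * Real.cosh (t / 2) ^ 2 - 1) ^ 2 - 1 := by
      rw [show (2:ℝ) * t = 2 * (2 * (t / 2)) by ring, Real.cosh_two_mul, Real.sinh_sq,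
        Real.cosh_two_mul, Real.sinh_sq]
      ring
    have e1 : (s * Real.sinh (t / 2)) ^ 2 = b * (Real.cosh (t / 2) ^ 2 - 1) := by
      rw [mul_pow, hs2, Real.sinh_sq]
    have e2 : (s * Real.sinh (t / 2)) ^ 4 = (b * (Real.cosh (t / 2) ^ 2 - 1)) ^ 2 := by
      rw [show (4:ℕ) = 2 * 2 from rfl, pow_mul, e1]
    have hexp : -(s * Real.sinh (t / 2)) ^ 4 - b * (s * Real.sinh (t / 2)) ^ 2
        = b ^ 2 / 8 + -(b ^ 2 / 8) * Real.cosh (2 * t) := by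
      rw [e2, e1, hch]; ring
    simp only [smul_eq_mul]
    rw [abs_of_pos (mul_pos (by positivity) (Real.cosh_pos _)), hexp, Real.exp_add,
      show (1:ℝ) / 4 * (2 * t) = t / 2 by ring]
    ring
  rw [heven, hsub, setIntegral_congr_fun measurableSet_Ioi hpt, integral_const_mul]
  have hc := integral_comp_mul_left_Ioi
    (fun u => Real.exp (-(b ^ 2 / 8) * Real.cosh u) * Real.cosh (1 / 4 * u)) 0 two_pos
  rw [mul_zero] at hc
  rw [hc, besselK]
  simp only [smul_eq_mul]
  ring

/-- the strong-coupling expansion of the quartic integral converges and sums to a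
Bessel function. -/
theorem strong_coupling_expansion (g : ℝ) (hg : 0 < g) :
    HasSum
      (fun p : ℕ =>
        (1 / (2 * Real.pi)) * ((-1) ^ p / (2 ^ p * (p.factorial : ℝ))) * g ^ (-(2 * (p : ℤ))) *
          ∫ x : ℝ, x ^ (2 * p) * Real.exp (-x ^ 4))
      ((1 / Real.sqrt (32 * Real.pi ^ 2 * g ^ 2)) * Real.exp (1 / (32 * g ^ 4)) *
        besselK (1 / 4) (1 / (32 * g ^ 4))) := by
  have hg2 : (0:ℝ) < 2 * g ^ 2 := by positivity
  set F : ℕ → ℝ → ℝ := fun p x =>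
    (-(x ^ 2) / (2 * g ^ 2)) ^ p / (p.factorial : ℝ) * Real.exp (-x ^ 4) with hFdef
  have hF_eq : ∀ p, F p = fun x =>
      ((-1 / (2 * g ^ 2)) ^ p / (p.factorial : ℝ)) * (x ^ (2 * p) * Real.exp (-x ^ 4)) := by
    intro p
    funext x
    simp only [hFdef]
    have : -(x ^ 2) / (2 * g ^ 2) = (-1 / (2 * g ^ 2)) * x ^ 2 := by ring
    rw [this, mul_pow, ← pow_mul]
    ring
  have hF_int : ∀ p, Integrable (F p) := by
    intro p
    rw [hF_eq p]
    exact (integrable_pow_exp p).const_mul _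
  set C : ℝ := ∫ x : ℝ, Real.exp (1 / g ^ 2 * x ^ 2 - x ^ 4) with hCdef
  have hsummable : Summable fun p => ∫ x : ℝ, ‖F p x‖ := by
    apply Summable.of_nonneg_of_le (fun p => integral_nonneg fun x => norm_nonneg _)
      (fun p => ?_) (summable_geometric_two.mul_right C)
    have hle : ∀ x : ℝ, ‖F p x‖ ≤ (1 / 2) ^ p * Real.exp (1 / g ^ 2 * x ^ 2 - x ^ 4) := by
      intro x
      have habs : |(-(x ^ 2) / (2 * g ^ 2))| = x ^ 2 / (2 * g ^ 2) := by
        rw [abs_div, abs_neg, abs_of_nonneg (sq_nonneg x), abs_of_nonneg hg2.le]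
      have hnorm : ‖F p x‖ = (x ^ 2 / (2 * g ^ 2)) ^ p / (p.factorial : ℝ)
          * Real.exp (-x ^ 4) := by
        simp only [hFdef, Real.norm_eq_abs, abs_mul, abs_div, abs_pow, habs, Nat.abs_cast,
          abs_of_nonneg (Real.exp_nonneg (-x ^ 4))]
      rw [hnorm]
      have key : (x ^ 2) ^ p ≤ (p.factorial : ℝ) * ((1 / g ^ 2) ^ p)⁻¹
          * Real.exp (1 / g ^ 2 * x ^ 2) :=
        (pow_le_exp_aux (1 / g ^ 2) x (by positivity) p).trans_eq
          (by rw [zpow_neg, zpow_natCast])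
      rw [show (((1:ℝ) / g ^ 2) ^ p)⁻¹ = (g ^ 2) ^ p by
        rw [one_div, inv_pow, inv_inv]] at key
      have h2 : ((1:ℝ) / 2) ^ p * 2 ^ p = 1 := by rw [← mul_pow]; norm_num
      have h1 : (x ^ 2 / (2 * g ^ 2)) ^ p / (p.factorial : ℝ)
          ≤ (1 / 2) ^ p * Real.exp (1 / g ^ 2 * x ^ 2) := by
        rw [div_pow, div_div, div_le_iff₀ (by positivity)]
        refine key.trans (le_of_eq ?_)
        rw [mul_pow 2 (g ^ 2)]
        linear_combination (-(Real.exp (1 / g ^ 2 * x ^ 2) * (g ^ 2) ^ p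
          * (p.factorial : ℝ))) * h2
      calc (x ^ 2 / (2 * g ^ 2)) ^ p / (p.factorial : ℝ) * Real.exp (-x ^ 4)
          ≤ (1 / 2) ^ p * Real.exp (1 / g ^ 2 * x ^ 2) * Real.exp (-x ^ 4) :=
            mul_le_mul_of_nonneg_right h1 (Real.exp_nonneg _)
        _ = (1 / 2) ^ p * Real.exp (1 / g ^ 2 * x ^ 2 - x ^ 4) := by
            rw [mul_assoc, ← Real.exp_add, sub_eq_add_neg]
    calc ∫ x : ℝ, ‖F p x‖
        ≤ ∫ x : ℝ, (1 / 2) ^ p * Real.exp (1 / g ^ 2 * x ^ 2 - x ^ 4) :=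
          integral_mono (hF_int p).norm ((integrable_aux _).const_mul _) hle
      _ = (1 / 2) ^ p * C := by rw [integral_const_mul, hCdef]
  have hhs := hasSum_integral_of_summable_integral_norm hF_int hsummable
  have htsum : ∀ x : ℝ, ∑' p, F p x = Real.exp (-x ^ 4 - 1 / (2 * g ^ 2) * x ^ 2) := by
    intro x
    have h := NormedSpace.expSeries_div_hasSum_exp (-(x ^ 2) / (2 * g ^ 2))
    rw [← Real.exp_eq_exp_ℝ] at h
    have h2 : HasSum (fun p => F p x)
        (Real.exp (-(x ^ 2) / (2 * g ^ 2)) * Real.exp (-x ^ 4)) := h.mul_right _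
    rw [h2.tsum_eq, ← Real.exp_add]
    congr 1
    ring
  simp_rw [htsum] at hhs
  rw [quartic_integral (1 / (2 * g ^ 2)) (by positivity)] at hhs
  have final := hhs.mul_left (1 / (2 * Real.pi))
  convert! final using 1
  · funext p
    rw [hF_eq p, integral_const_mul]
    rw [show -(2 * (p:ℤ)) = -((2 * p : ℕ) : ℤ) by push_cast; ring, zpow_neg, zpow_natCast]
    have hpow : (-1 / (2 * g ^ 2)) ^ p = (-1 : ℝ) ^ p / (2 ^ p * g ^ (2 * p)) := by
      rw [div_pow, mul_pow, ← pow_mul]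
    rw [hpow]
    ring
  · have hz : (1 / (2 * g ^ 2)) ^ 2 / 8 = 1 / (32 * g ^ 4) := by
      field_simp; ring
    rw [hz]
    have hsc : 1 / (2 * Real.pi) * (Real.sqrt (1 / (2 * g ^ 2)) / 2)
        = 1 / Real.sqrt (32 * Real.pi ^ 2 * g ^ 2) := by
      rw [one_div (Real.sqrt _), ← Real.sqrt_inv]
      rw [show (32 * Real.pi ^ 2 * g ^ 2)⁻¹ = (1 / (4 * Real.pi)) ^ 2 * (1 / (2 * g ^ 2)) by
        field_simp; ring]
      rw [Real.sqrt_mul (sq_nonneg _), Real.sqrt_sq (by positivity)]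
      ring
    rw [← hsc]
    ring
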